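/- With the tower of the previous statement (a_k = exp(−8^{l+1}) for 8^l ≤ k < 8^{l+1}) and the same ψ, one has {x ∈ (0,1] : (1/(2·8^l)) S_{2·8^l} ψ(x,0) ≥ 1/2} ⊇ (0, a_{8^l}] for every l ≥ 0, and hence limsup_{n→∞} (1/n) log m({x : (1/n) S_n ψ(x,0) ≥ 1/2}) ≥ −4. Together with the previous statement, no function q_ψ can satisfy both the lower large deviation bound with level 7/16 and the upper bound with level 1/2, so the large deviations estimates of Theorem 1 fail for this tower even though a_k decays exponentially. -/

import Mathlib

open scoped Classical

open MeasureTheory Real Filter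

/-- Birkhoff sum along `T`. -/
noncomputable def birkhoffSum' {Z : Type*} (T : Z → Z) (ψ : Z → ℝ) (n : ℕ) (z : Z) : ℝ :=
  ∑ i ∈ Finset.range n, ψ (T^[i] z)

/- ### Auxiliary definitions and lemmas -/

/-- The indicator of the "good" heights. -/
noncomputable def chiStmt6 (k : ℕ) : ℝ :=
  if ∃ l : ℕ, 8 ^ l ≤ k ∧ k < 2 * 8 ^ l then 1 else 0

/-- Partial counting function of good heights. -/
noncomputable def FStmt6 (t : ℕ) : ℝ := ∑ i ∈ Finset.range t, chiStmt6 i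

lemma chiStmt6_nonneg (k : ℕ) : 0 ≤ chiStmt6 k := by
  unfold chiStmt6; split <;> norm_num

lemma chiStmt6_le_one (k : ℕ) : chiStmt6 k ≤ 1 := by
  unfold chiStmt6; split <;> norm_num

lemma chiStmt6_eq_one {j k : ℕ} (h1 : 8 ^ j ≤ k) (h2 : k < 2 * 8 ^ j) : chiStmt6 k = 1 :=
  if_pos ⟨j, h1, h2⟩

lemma chiStmt6_eq_zero_high {j k : ℕ} (h1 : 2 * 8 ^ j ≤ k) (h2 : k < 8 ^ (j + 1)) :
    chiStmt6 k = 0 := by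
  unfold chiStmt6
  rw [if_neg]
  rintro ⟨j', hj1, hj2⟩
  have h3 : (8:ℕ) ^ j < 8 ^ j' := by omega
  have h4 : j < j' := (Nat.pow_lt_pow_iff_right (by norm_num)).1 h3
  have h5 : (8:ℕ) ^ (j + 1) ≤ 8 ^ j' := Nat.pow_le_pow_right (by norm_num) h4
  omega

lemma chiStmt6_zero : chiStmt6 0 = 0 := by
  unfold chiStmt6
  rw [if_neg]
  rintro ⟨l, h1, -⟩
  have : 0 < (8:ℕ) ^ l := pow_pos (by norm_num) l
  omega

lemma sum_chiStmt6_le_card (s : Finset ℕ) : ∑ i ∈ s, chiStmt6 i ≤ s.card := by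
  calc ∑ i ∈ s, chiStmt6 i ≤ ∑ i ∈ s, (1:ℝ) :=
        Finset.sum_le_sum fun i _ => chiStmt6_le_one i
  _ = s.card := by simp

lemma sum_block_chiStmt6 {j b : ℕ} (hb : b ≤ 8 ^ (j + 1)) :
    ∑ i ∈ Finset.Ico (8 ^ j) b, chiStmt6 i ≤ (8:ℝ) ^ j := by
  rcases le_or_gt b (2 * 8 ^ j) with h | h
  · refine (sum_chiStmt6_le_card _).trans ?_
    rw [Nat.card_Ico]
    calc ((b - 8 ^ j : ℕ) : ℝ) ≤ ((8 ^ j : ℕ) : ℝ) := Nat.cast_le.2 (by omega)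
    _ = (8:ℝ) ^ j := by push_cast; ring
  · rw [← Finset.sum_Ico_consecutive chiStmt6
      (show 8 ^ j ≤ 2 * 8 ^ j by omega) h.le]
    have h2 : ∑ i ∈ Finset.Ico (2 * 8 ^ j) b, chiStmt6 i = 0 := by
      refine Finset.sum_eq_zero fun i hi => ?_
      rw [Finset.mem_Ico] at hi
      exact chiStmt6_eq_zero_high hi.1 (hi.2.trans_le hb)
    rw [h2, add_zero]
    refine (sum_chiStmt6_le_card _).trans ?_
    rw [Nat.card_Ico, show 2 * 8 ^ j - 8 ^ j = 8 ^ j from by omega]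
    push_cast
    exact le_rfl

lemma FStmt6_split {m t : ℕ} (h : m ≤ t) :
    FStmt6 t = FStmt6 m + ∑ i ∈ Finset.Ico m t, chiStmt6 i := by
  unfold FStmt6
  rw [Finset.range_eq_Ico, Finset.range_eq_Ico]
  exact (Finset.sum_Ico_consecutive chiStmt6 (Nat.zero_le m) h).symm

lemma FStmt6_pow (J : ℕ) : 7 * FStmt6 (8 ^ J) ≤ (8:ℝ) ^ J := by
  induction J with
  | zero =>
    simp [FStmt6, chiStmt6_zero]
  | succ J ih =>
    rw [FStmt6_split (Nat.pow_le_pow_right (by norm_num) (Nat.le_succ J))]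
    have h2 := sum_block_chiStmt6 (le_refl (8 ^ (J + 1)))
    have h3 : (8:ℝ) ^ (J + 1) = 8 ^ J * 8 := pow_succ 8 J
    linarith

lemma FStmt6_bound : ∀ l t : ℕ, t ≤ 8 ^ (l + 1) → 7 * FStmt6 t ≤ (t : ℝ) + 6 * 8 ^ l := by
  intro l
  induction l with
  | zero =>
    intro t ht
    have hF : FStmt6 t ≤ 1 := by
      unfold FStmt6
      calc ∑ i ∈ Finset.range t, chiStmt6 i
          ≤ ∑ i ∈ Finset.range t, (if i = 1 then (1:ℝ) else 0) := by
            refine Finset.sum_le_sum fun i hi => ?_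
            rw [Finset.mem_range] at hi
            by_cases h1 : i = 1
            · rw [if_pos h1]; exact chiStmt6_le_one i
            · rw [if_neg h1]
              rcases Nat.eq_zero_or_pos i with h0 | h0
              · rw [h0, chiStmt6_zero]
              · have : chiStmt6 i = 0 := by
                  refine chiStmt6_eq_zero_high (j := 0) (by omega) ?_
                  have : t ≤ 8 := by simpa using ht
                  omega
                rw [this]
      _ ≤ 1 := by
        rw [Finset.sum_ite_eq' (Finset.range t) 1 (fun _ => (1:ℝ))]
        split <;> norm_num
    rcases Nat.eq_zero_or_pos t with h0 | h0
    · subst h0; simp [FStmt6]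
    · have h1 : (1:ℝ) ≤ t := by exact_mod_cast h0
      norm_num
      linarith
  | succ l ih =>
    intro t ht
    rcases le_or_gt t (8 ^ (l + 1)) with h | h
    · have h1 := ih t h
      have h2 : (8:ℝ) ^ l ≤ 8 ^ (l + 1) := by
        apply pow_le_pow_right₀ <;> norm_num
      linarith
    · have hsplit := FStmt6_split h.le
      have hFp := FStmt6_pow (l + 1)
      have h81 : ((8 ^ (l+1) : ℕ) : ℝ) = (8:ℝ) ^ (l+1) := by push_cast; ring
      rcases le_or_gt t (2 * 8 ^ (l + 1)) with h2 | h2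
      · have hs : ∑ i ∈ Finset.Ico (8 ^ (l+1)) t, chiStmt6 i ≤ ((t - 8 ^ (l+1) : ℕ) : ℝ) := by
          refine (sum_chiStmt6_le_card _).trans ?_
          rw [Nat.card_Ico]
        have hc : ((t - 8 ^ (l+1) : ℕ) : ℝ) = (t : ℝ) - (8:ℝ) ^ (l+1) := by
          rw [Nat.cast_sub h.le, h81]
        have ht2 : (t : ℝ) ≤ 2 * (8:ℝ) ^ (l+1) := by exact_mod_cast h2
        rw [hsplit]
        rw [hc] at hs
        linarith
      · have hs : ∑ i ∈ Finset.Ico (8 ^ (l+1)) t, chiStmt6 i ≤ (8:ℝ) ^ (l+1) :=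
          sum_block_chiStmt6 ht
        have ht2 : 2 * (8:ℝ) ^ (l+1) ≤ (t : ℝ) := by exact_mod_cast h2.le
        rw [hsplit]
        linarith

lemma birkhoffSum'_add {Z : Type*} (T : Z → Z) (ψ : Z → ℝ) (m p : ℕ) (z : Z) :
    birkhoffSum' T ψ (m + p) z = birkhoffSum' T ψ m z + birkhoffSum' T ψ p (T^[m] z) := by
  induction p with
  | zero => simp [birkhoffSum']
  | succ p ih =>
    unfold birkhoffSum' at *
    rw [← Nat.add_assoc, Finset.sum_range_succ, Finset.sum_range_succ, ih, add_assoc]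
    congr 2
    rw [add_comm m p, Function.iterate_add_apply]

section TowerStmt6

variable {a : ℕ → ℝ} {T : ℝ × ℕ → ℝ × ℕ} {ψ : ℝ × ℕ → ℝ}

lemma aStmt6_val (ha : ∀ k l : ℕ, 8 ^ l ≤ k → k < 8 ^ (l + 1) → a k = Real.exp (-(8 : ℝ) ^ (l + 1)))
    {k : ℕ} (hk : k ≠ 0) : a k = Real.exp (-(8:ℝ) ^ (Nat.log 8 k + 1)) :=
  ha k (Nat.log 8 k) (Nat.pow_log_le_self 8 hk) (Nat.lt_pow_succ_log_self (by norm_num) k)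

lemma aStmt6_pos (ha0 : a 0 = 1)
    (ha : ∀ k l : ℕ, 8 ^ l ≤ k → k < 8 ^ (l + 1) → a k = Real.exp (-(8 : ℝ) ^ (l + 1)))
    (k : ℕ) : 0 < a k := by
  rcases Nat.eq_zero_or_pos k with h | h
  · rw [h, ha0]; norm_num
  · rw [aStmt6_val ha h.ne']; exact Real.exp_pos _

lemma aStmt6_le_one (ha0 : a 0 = 1)
    (ha : ∀ k l : ℕ, 8 ^ l ≤ k → k < 8 ^ (l + 1) → a k = Real.exp (-(8 : ℝ) ^ (l + 1)))
    (k : ℕ) : a k ≤ 1 := by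
  rcases Nat.eq_zero_or_pos k with h | h
  · rw [h, ha0]
  · rw [aStmt6_val ha h.ne', ← Real.exp_zero]
    apply Real.exp_le_exp.2
    have : (0:ℝ) < (8:ℝ) ^ (Nat.log 8 k + 1) := by positivity
    linarith

lemma aStmt6_anti (ha0 : a 0 = 1)
    (ha : ∀ k l : ℕ, 8 ^ l ≤ k → k < 8 ^ (l + 1) → a k = Real.exp (-(8 : ℝ) ^ (l + 1)))
    {k m : ℕ} (h : k ≤ m) : a m ≤ a k := by
  rcases Nat.eq_zero_or_pos k with h0 | h0
  · rw [h0, ha0]; exact aStmt6_le_one ha0 ha m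
  · have hm : 0 < m := lt_of_lt_of_le h0 h
    rw [aStmt6_val ha h0.ne', aStmt6_val ha hm.ne']
    apply Real.exp_le_exp.2
    have hlog : Nat.log 8 k ≤ Nat.log 8 m := Nat.log_mono_right h
    have : (8:ℝ) ^ (Nat.log 8 k + 1) ≤ (8:ℝ) ^ (Nat.log 8 m + 1) := by
      apply pow_le_pow_right₀ (by norm_num)
      omega
    linarith

lemma aStmt6_block (ha0 : a 0 = 1)
    (ha : ∀ k l : ℕ, 8 ^ l ≤ k → k < 8 ^ (l + 1) → a k = Real.exp (-(8 : ℝ) ^ (l + 1)))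
    {l m : ℕ} (hm : m < 8 ^ (l + 1)) : a (8 ^ l) ≤ a m := by
  rcases le_or_gt m (8 ^ l) with h | h
  · exact aStmt6_anti ha0 ha h
  · rw [ha m l h.le hm, ha (8 ^ l) l le_rfl (Nat.pow_lt_pow_succ (by norm_num))]

lemma climbStmt6
    (hT : ∀ x : ℝ, ∀ k : ℕ, T (x, k) =
      if x ≤ a (k + 1) then (x, k + 1) else ((x - a (k + 1)) / (a k - a (k + 1)), 0))
    (x : ℝ) : ∀ i : ℕ, (∀ m, 1 ≤ m → m ≤ i → x ≤ a m) → T^[i] (x, 0) = (x, i) := by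
  intro i
  induction i with
  | zero => intro _; simp
  | succ i ih =>
    intro h
    rw [Function.iterate_succ_apply', ih (fun m h1 h2 => h m h1 (h2.trans (Nat.le_succ i))),
      hT, if_pos (h (i + 1) (by omega) le_rfl)]

lemma birkhoff_climbStmt6
    (hT : ∀ x : ℝ, ∀ k : ℕ, T (x, k) =
      if x ≤ a (k + 1) then (x, k + 1) else ((x - a (k + 1)) / (a k - a (k + 1)), 0))
    (hψ : ∀ x : ℝ, ∀ k : ℕ, ψ (x, k) =
      if ∃ l : ℕ, 8 ^ l ≤ k ∧ k < 2 * 8 ^ l then 1 else 0)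
    (x : ℝ) (n : ℕ) (h : ∀ m, 1 ≤ m → m < n → x ≤ a m) :
    birkhoffSum' T ψ n (x, 0) = FStmt6 n := by
  unfold birkhoffSum' FStmt6
  refine Finset.sum_congr rfl fun i hi => ?_
  rw [Finset.mem_range] at hi
  rw [climbStmt6 hT x i (fun m h1 h2 => h m h1 (by omega)), hψ]
  rfl

lemma mainStmt6 (ha0 : a 0 = 1)
    (ha : ∀ k l : ℕ, 8 ^ l ≤ k → k < 8 ^ (l + 1) → a k = Real.exp (-(8 : ℝ) ^ (l + 1)))
    (hT : ∀ x : ℝ, ∀ k : ℕ, T (x, k) =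
      if x ≤ a (k + 1) then (x, k + 1) else ((x - a (k + 1)) / (a k - a (k + 1)), 0))
    (hψ : ∀ x : ℝ, ∀ k : ℕ, ψ (x, k) =
      if ∃ l : ℕ, 8 ^ l ≤ k ∧ k < 2 * 8 ^ l then 1 else 0)
    (l : ℕ) :
    ∀ n : ℕ, n ≤ 8 ^ (l + 1) → ∀ x : ℝ, 0 < x → x ≤ 1 →
      7 * birkhoffSum' T ψ n (x, 0) ≤ (n : ℝ) + 6 * 8 ^ l := by
  intro n
  induction n using Nat.strong_induction_on with
  | _ n ih =>
  intro hn x hx0 hx1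
  by_cases hcl : ∀ m, 1 ≤ m → m ≤ n → x ≤ a m
  · rw [birkhoff_climbStmt6 hT hψ x n (fun m h1 h2 => hcl m h1 h2.le)]
    exact FStmt6_bound l n hn
  · push_neg at hcl
    obtain ⟨m, hm1, hmn, hmx⟩ := hcl
    have hex : ∃ m, a m < x := ⟨m, hmx⟩
    set k := Nat.find hex with hkdef
    have hak : a k < x := Nat.find_spec hex
    have hmin : ∀ i, i < k → x ≤ a i := fun i hi => not_lt.1 (Nat.find_min hex hi)
    have hk1 : 1 ≤ k := by
      rcases Nat.eq_zero_or_pos k with h0 | h0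
      · exfalso; rw [h0, ha0] at hak; linarith
      · exact h0
    have hkn : k ≤ n := (Nat.find_min' hex hmx).trans hmn
    set j := Nat.log 8 k with hjdef
    have hjk : 8 ^ j ≤ k := Nat.pow_log_le_self 8 (by omega)
    have hkj : k < 8 ^ (j + 1) := Nat.lt_pow_succ_log_self (by norm_num) k
    have hkeq : k = 8 ^ j := by
      by_contra hne
      have h8j : 8 ^ j < k := lt_of_le_of_ne hjk (Ne.symm hne)
      have heq : a (8 ^ j) = a k := by
        rw [ha (8 ^ j) j le_rfl (Nat.pow_lt_pow_succ (by norm_num)), ha k j hjk hkj]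
      have := hmin (8 ^ j) h8j
      rw [heq] at this
      linarith
    have hclimb : T^[k - 1] (x, 0) = (x, k - 1) :=
      climbStmt6 hT x (k - 1) (fun m h1 h2 => hmin m (by omega))
    have hks : k - 1 + 1 = k := Nat.succ_pred_eq_of_pos hk1
    have hstep : T^[k] (x, 0) = ((x - a k) / (a (k - 1) - a k), 0) := by
      calc T^[k] (x, 0) = T^[k - 1 + 1] (x, 0) := by rw [hks]
      _ = T (T^[k - 1] (x, 0)) := Function.iterate_succ_apply' T (k - 1) (x, 0)
      _ = T (x, k - 1) := by rw [hclimb]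
      _ = ((x - a k) / (a (k - 1) - a k), 0) := by
          rw [hT, hks, if_neg (not_le.2 hak)]
    set x' := (x - a k) / (a (k - 1) - a k) with hx'def
    have hak1 : x ≤ a (k - 1) := hmin (k - 1) (by omega)
    have hx'0 : 0 < x' := div_pos (by linarith) (by linarith)
    have hx'1 : x' ≤ 1 := by
      rw [hx'def, div_le_one (by linarith)]
      linarith
    have hsum : birkhoffSum' T ψ n (x, 0)
        = birkhoffSum' T ψ k (x, 0) + birkhoffSum' T ψ (n - k) (x', 0) := by
      calc birkhoffSum' T ψ n (x, 0) = birkhoffSum' T ψ (k + (n - k)) (x, 0) := by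
            rw [Nat.add_sub_cancel' hkn]
      _ = _ := by rw [birkhoffSum'_add, hstep]
    have hB1 : birkhoffSum' T ψ k (x, 0) = FStmt6 k :=
      birkhoff_climbStmt6 hT hψ x k (fun m h1 h2 => hmin m (by omega))
    have hFk : 7 * FStmt6 k ≤ (k : ℝ) := by
      rw [hkeq]
      calc 7 * FStmt6 (8 ^ j) ≤ (8:ℝ) ^ j := FStmt6_pow j
      _ = ((8 ^ j : ℕ) : ℝ) := by push_cast; ring
    have hrec := ih (n - k) (by omega) ((Nat.sub_le n k).trans hn) x' hx'0 hx'1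
    have hcast : ((n - k : ℕ) : ℝ) = (n : ℝ) - (k : ℝ) := by
      rw [Nat.cast_sub hkn]
    rw [hcast] at hrec
    rw [hsum, hB1]
    linarith

lemma part1Stmt6 (ha0 : a 0 = 1)
    (ha : ∀ k l : ℕ, 8 ^ l ≤ k → k < 8 ^ (l + 1) → a k = Real.exp (-(8 : ℝ) ^ (l + 1)))
    (hT : ∀ x : ℝ, ∀ k : ℕ, T (x, k) =
      if x ≤ a (k + 1) then (x, k + 1) else ((x - a (k + 1)) / (a k - a (k + 1)), 0))
    (hψ : ∀ x : ℝ, ∀ k : ℕ, ψ (x, k) =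
      if ∃ l : ℕ, 8 ^ l ≤ k ∧ k < 2 * 8 ^ l then 1 else 0)
    (l : ℕ) :
    Set.Ioc (0 : ℝ) (a (8 ^ l)) ⊆
      {x : ℝ | x ∈ Set.Ioc (0 : ℝ) 1 ∧
        birkhoffSum' T ψ (2 * 8 ^ l) (x, 0) / ((2 * 8 ^ l : ℕ) : ℝ) ≥ 1 / 2} := by
  intro x hx
  obtain ⟨hx0, hxa⟩ := hx
  have hx1 : x ≤ 1 := hxa.trans (aStmt6_le_one ha0 ha _)
  have h2lt : 2 * 8 ^ l < 8 ^ (l + 1) := by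
    have : (8:ℕ) ^ (l + 1) = 8 ^ l * 8 := pow_succ 8 l
    have h8 : 0 < (8:ℕ) ^ l := pow_pos (by norm_num) l
    omega
  have hcl : ∀ m, 1 ≤ m → m ≤ 2 * 8 ^ l → x ≤ a m := fun m _ h2 =>
    hxa.trans (aStmt6_block ha0 ha (by omega))
  have hsum_eq : birkhoffSum' T ψ (2 * 8 ^ l) (x, 0) = FStmt6 (2 * 8 ^ l) :=
    birkhoff_climbStmt6 hT hψ x _ (fun m h1 h2 => hcl m h1 h2.le)
  have hge : (8:ℝ) ^ l ≤ FStmt6 (2 * 8 ^ l) := by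
    unfold FStmt6
    have hsub : Finset.Ico (8 ^ l) (2 * 8 ^ l) ⊆ Finset.range (2 * 8 ^ l) := by
      intro i hi
      rw [Finset.mem_Ico] at hi
      rw [Finset.mem_range]
      omega
    calc (8:ℝ) ^ l = ∑ i ∈ Finset.Ico (8 ^ l) (2 * 8 ^ l), chiStmt6 i := by
          rw [Finset.sum_congr rfl
            (fun i hi => chiStmt6_eq_one (Finset.mem_Ico.1 hi).1 (Finset.mem_Ico.1 hi).2)]
          rw [Finset.sum_const, Nat.card_Ico]
          have : 2 * 8 ^ l - 8 ^ l = 8 ^ l := by omega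
          rw [this]
          push_cast
          ring
    _ ≤ ∑ i ∈ Finset.range (2 * 8 ^ l), chiStmt6 i :=
        Finset.sum_le_sum_of_subset_of_nonneg hsub fun i _ _ => chiStmt6_nonneg i
  refine ⟨⟨hx0, hx1⟩, ?_⟩
  have hnpos : (0:ℝ) < ((2 * 8 ^ l : ℕ) : ℝ) := by positivity
  rw [ge_iff_le, le_div_iff₀ hnpos, hsum_eq]
  have hcast : ((2 * 8 ^ l : ℕ) : ℝ) = 2 * (8:ℝ) ^ l := by push_cast; ring
  rw [hcast]
  linarith

lemma emptyStmt6 (ha0 : a 0 = 1)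
    (ha : ∀ k l : ℕ, 8 ^ l ≤ k → k < 8 ^ (l + 1) → a k = Real.exp (-(8 : ℝ) ^ (l + 1)))
    (hT : ∀ x : ℝ, ∀ k : ℕ, T (x, k) =
      if x ≤ a (k + 1) then (x, k + 1) else ((x - a (k + 1)) / (a k - a (k + 1)), 0))
    (hψ : ∀ x : ℝ, ∀ k : ℕ, ψ (x, k) =
      if ∃ l : ℕ, 8 ^ l ≤ k ∧ k < 2 * 8 ^ l then 1 else 0)
    (l : ℕ) :
    {x : ℝ | x ∈ Set.Ioc (0 : ℝ) 1 ∧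
      birkhoffSum' T ψ (8 ^ (l + 1)) (x, 0) / ((8 ^ (l + 1) : ℕ) : ℝ) > 7 / 16} = ∅ := by
  rw [Set.eq_empty_iff_forall_notMem]
  rintro x ⟨⟨hx0, hx1⟩, hgt⟩
  have hb := mainStmt6 ha0 ha hT hψ l (8 ^ (l + 1)) le_rfl x hx0 hx1
  have hnpos : (0:ℝ) < ((8 ^ (l + 1) : ℕ) : ℝ) := by positivity
  have hlt := (lt_div_iff₀ hnpos).1 hgt
  have hcast : ((8 ^ (l + 1) : ℕ) : ℝ) = 8 * (8:ℝ) ^ l := by push_cast; rw [pow_succ]; ring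
  have hp : (0:ℝ) < (8:ℝ) ^ l := by positivity
  rw [hcast] at hb hlt
  linarith

end TowerStmt6

lemma eRealNeg4 : ((-4:ℝ):EReal) = (-4:EReal) := by
  rw [show ((-4:ℝ)) = -(4:ℝ) by norm_num, EReal.coe_neg]; rfl

/-- For the tower of Statement 5 (`a_k = exp(−8^{l+1})` for
`8^l ≤ k < 8^{l+1}`) with the same observable `ψ`, one has
`{x ∈ (0,1] : (1/(2·8^l)) S_{2·8^l}ψ(x,0) ≥ 1/2} ⊇ (0, a_{8^l}]` for every `l ≥ 0`, hence
`limsup (1/n) log m({x : (1/n)S_nψ(x,0) ≥ 1/2}) ≥ −4`; together with the liminf being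
`−∞` at level `7/16`, no rate function `q` can satisfy both the lower large deviation
bound at level `7/16` and the upper bound at level `1/2`. -/
theorem stmt6 (a : ℕ → ℝ) (ha0 : a 0 = 1)
    (ha : ∀ k l : ℕ, 8 ^ l ≤ k → k < 8 ^ (l + 1) → a k = Real.exp (-(8 : ℝ) ^ (l + 1)))
    (T : ℝ × ℕ → ℝ × ℕ)
    (hT : ∀ x : ℝ, ∀ k : ℕ, T (x, k) =
      if x ≤ a (k + 1) then (x, k + 1) else ((x - a (k + 1)) / (a k - a (k + 1)), 0))
    (ψ : ℝ × ℕ → ℝ)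
    (hψ : ∀ x : ℝ, ∀ k : ℕ, ψ (x, k) =
      if ∃ l : ℕ, 8 ^ l ≤ k ∧ k < 2 * 8 ^ l then 1 else 0) :
    (∀ l : ℕ,
      Set.Ioc (0 : ℝ) (a (8 ^ l)) ⊆
        {x : ℝ | x ∈ Set.Ioc (0 : ℝ) 1 ∧
          birkhoffSum' T ψ (2 * 8 ^ l) (x, 0) / ((2 * 8 ^ l : ℕ) : ℝ) ≥ 1 / 2}) ∧
    ((-4 : EReal) ≤ limsup (fun n : ℕ =>
      ENNReal.log (volume {x : ℝ | x ∈ Set.Ioc (0 : ℝ) 1 ∧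
        birkhoffSum' T ψ n (x, 0) / (n : ℝ) ≥ 1 / 2}) / (n : EReal)) atTop) ∧
    ¬ ∃ q : ℝ → EReal,
      ((⨆ t ∈ Set.Ioi (7 / 16 : ℝ), q t) ≤ liminf (fun n : ℕ =>
        ENNReal.log (volume {x : ℝ | x ∈ Set.Ioc (0 : ℝ) 1 ∧
          birkhoffSum' T ψ n (x, 0) / (n : ℝ) > 7 / 16}) / (n : EReal)) atTop) ∧
      (limsup (fun n : ℕ =>
        ENNReal.log (volume {x : ℝ | x ∈ Set.Ioc (0 : ℝ) 1 ∧
          birkhoffSum' T ψ n (x, 0) / (n : ℝ) ≥ 1 / 2}) / (n : EReal)) atTop ≤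
        ⨆ t ∈ Set.Ici (1 / 2 : ℝ), q t) := by
  have hpart1 := part1Stmt6 ha0 ha hT hψ
  have hpart2 : (-4 : EReal) ≤ limsup (fun n : ℕ =>
      ENNReal.log (volume {x : ℝ | x ∈ Set.Ioc (0 : ℝ) 1 ∧
        birkhoffSum' T ψ n (x, 0) / (n : ℝ) ≥ 1 / 2}) / (n : EReal)) atTop := by
    apply le_limsup_of_frequently_le'
    rw [Filter.frequently_atTop]
    intro N
    refine ⟨2 * 8 ^ N, ?_, ?_⟩
    · have := Nat.lt_pow_self (n := N) (show 1 < 8 by norm_num)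
      omega
    · have hvol : ENNReal.ofReal (Real.exp (-(8:ℝ) ^ (N + 1))) ≤
          volume {x : ℝ | x ∈ Set.Ioc (0 : ℝ) 1 ∧
            birkhoffSum' T ψ (2 * 8 ^ N) (x, 0) / ((2 * 8 ^ N : ℕ) : ℝ) ≥ 1 / 2} := by
        have h1 : volume (Set.Ioc (0:ℝ) (a (8 ^ N))) = ENNReal.ofReal (a (8 ^ N)) := by
          rw [Real.volume_Ioc, sub_zero]
        have h2 : a (8 ^ N) = Real.exp (-(8:ℝ) ^ (N + 1)) :=
          ha (8 ^ N) N le_rfl (Nat.pow_lt_pow_succ (by norm_num))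
        rw [← h2, ← h1]
        exact measure_mono (hpart1 N)
      have hlog : ((-(8:ℝ) ^ (N + 1) : ℝ) : EReal) ≤
          ENNReal.log (volume {x : ℝ | x ∈ Set.Ioc (0 : ℝ) 1 ∧
            birkhoffSum' T ψ (2 * 8 ^ N) (x, 0) / ((2 * 8 ^ N : ℕ) : ℝ) ≥ 1 / 2}) := by
        calc ((-(8:ℝ) ^ (N + 1) : ℝ) : EReal)
            = ENNReal.log (ENNReal.ofReal (Real.exp (-(8:ℝ) ^ (N + 1)))) := by
              rw [ENNReal.log_ofReal_of_pos (Real.exp_pos _), Real.log_exp]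
        _ ≤ _ := ENNReal.log_monotone hvol
      have hne : (0:EReal) ≤ ((2 * 8 ^ N : ℕ) : EReal) := by
        rw [← EReal.coe_coe_eq_natCast]
        exact EReal.coe_nonneg.2 (Nat.cast_nonneg _)
      calc (-4 : EReal)
          = ((-(8:ℝ) ^ (N + 1) : ℝ) : EReal) / (((2 * 8 ^ N : ℕ) : ℕ) : EReal) := by
            rw [← EReal.coe_coe_eq_natCast, ← EReal.coe_div, ← eRealNeg4]
            congr 1
            have h8 : (0:ℝ) < ((2 * 8 ^ N : ℕ) : ℝ) := by positivity
            rw [eq_div_iff h8.ne']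
            push_cast
            rw [pow_succ]
            ring
      _ ≤ _ := EReal.div_le_div_right_of_nonneg hne hlog
  refine ⟨hpart1, hpart2, ?_⟩
  rintro ⟨q, h1, h2⟩
  have hmono : (⨆ t ∈ Set.Ici (1/2:ℝ), q t) ≤ ⨆ t ∈ Set.Ioi (7/16:ℝ), q t := by
    apply biSup_mono
    intro t ht
    exact lt_of_lt_of_le (by norm_num : (7/16:ℝ) < 1/2) ht
  have hbot : liminf (fun n : ℕ =>
      ENNReal.log (volume {x : ℝ | x ∈ Set.Ioc (0 : ℝ) 1 ∧
        birkhoffSum' T ψ n (x, 0) / (n : ℝ) > 7 / 16}) / (n : EReal)) atTop ≤ ⊥ := by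
    apply liminf_le_of_frequently_le'
    rw [Filter.frequently_atTop]
    intro N
    refine ⟨8 ^ (N + 1), ?_, ?_⟩
    · have := Nat.lt_pow_self (n := N) (show 1 < 8 by norm_num)
      have h2 : (8:ℕ) ^ N ≤ 8 ^ (N + 1) := Nat.pow_le_pow_right (by norm_num) (Nat.le_succ N)
      omega
    · rw [emptyStmt6 ha0 ha hT hψ N, measure_empty, ENNReal.log_zero,
        EReal.bot_div_of_pos_ne_top ?_ (EReal.natCast_ne_top _)]
      rw [← EReal.coe_coe_eq_natCast]
      exact_mod_cast Nat.cast_pos.2 (pow_pos (by norm_num) (N + 1))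
  have hchain : (-4 : EReal) ≤ ⊥ :=
    hpart2.trans (h2.trans (hmono.trans (h1.trans hbot)))
  rw [← eRealNeg4] at hchain
  exact (EReal.bot_lt_coe _).not_ge hchain
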